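/- If R : V → W is a coproduct-preserving functor between categories with coproducts, then the induced functor GR : GV → GW on categories of enriched graphs is distributive and path-like. -/

import Mathlib

open CategoryTheory Limits

universe v u w

/-- A `V`-enriched graph: a type of objects together with a hom-object of `V`
for each ordered pair of objects. -/
structure EGraph (V : Type u) [Category.{v} V] : Type (max u (v + 1)) where
  obj : Type v
  hom : obj → obj → V

namespace EGraph

variable {V : Type u} [Category.{v} V] {W : Type w} [Category.{v} W]

/-- Morphisms of enriched graphs. -/
structure Hom (X Y : EGraph V) : Type (max u v) where
  f : X.obj → Y.obj
  φ : ∀ a b : X.obj, X.hom a b ⟶ Y.hom (f a) (f b)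

theorem Hom.ext' {X Y : EGraph V} {F G : Hom X Y} (h : F.f = G.f)
    (h2 : HEq F.φ G.φ) : F = G := by
  cases F; cases G; cases h; cases h2; rfl

instance : Category (EGraph V) where
  Hom := Hom
  id X := ⟨_root_.id, fun a b => 𝟙 _⟩
  comp F G := ⟨G.f ∘ F.f, fun a b => F.φ a b ≫ G.φ _ _⟩
  id_comp F := Hom.ext' rfl (heq_of_eq (by funext a b; exact Category.id_comp _))
  comp_id F := Hom.ext' rfl (heq_of_eq (by funext a b; exact Category.comp_id _))
  assoc F G H := Hom.ext' rfl (heq_of_eq (by funext a b; exact Category.assoc _ _ _))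

/-- The functor `G V ⥤ G W` induced by a functor `V ⥤ W`, applying it to all homs. -/
def mapG (R : V ⥤ W) : EGraph V ⥤ EGraph W where
  obj X := ⟨X.obj, fun a b => R.obj (X.hom a b)⟩
  map F := ⟨F.f, fun a b => R.map (F.φ a b)⟩
  map_id X := Hom.ext' rfl (heq_of_eq (by funext a b; exact R.map_id _))
  map_comp F G := Hom.ext' rfl (heq_of_eq (by funext a b; exact R.map_comp _ _))

/-- A functor between categories of enriched graphs is *over `Set`* when it commutes
with the object-set functors. -/
def OverSet (T : EGraph V ⥤ EGraph W) : Prop :=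
  (∀ X : EGraph V, (T.obj X).obj = X.obj) ∧
    ∀ {X Y : EGraph V} (F : X ⟶ Y), HEq (T.map F).f (Hom.f F)

theorem cast_apply_heq {α α' : Type v} {β β' : Type v} (hα : α = α') (hβ : β = β')
    {f : α → β} {g : α' → β'} (h : HEq f g) (p : α) :
    f p = cast hβ.symm (g (cast hα p)) := by
  subst hα; subst hβ; cases h; simp

theorem map_f_eq (T : EGraph V ⥤ EGraph W) (hT : OverSet T) {X Y : EGraph V}
    (F : X ⟶ Y) (p : X.obj) :
    (T.map F).f (cast (hT.1 X).symm p) = cast (hT.1 Y).symm (F.f p) := by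
  rw [cast_apply_heq (hT.1 X) (hT.1 Y) (hT.2 F)]
  congr 2
  simp

variable [HasInitial V]

noncomputable section

/-- The `V`-graph `(X₁,…,Xₙ)` on objects `{0,…,n}`, with `Xᵢ` as the hom from
`i-1` to `i` and the initial object elsewhere. -/
def seq {n : ℕ} (Xs : Fin n → V) : EGraph V where
  obj := ULift.{v} (Fin (n + 1))
  hom i j := if h : (i.down : ℕ) + 1 = (j.down : ℕ) ∧ (i.down : ℕ) < n
    then Xs ⟨i.down, h.2⟩ else ⊥_ V

/-- The functor `T̄ₙ` associated to a functor over `Set`. -/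
def Tbar (T : EGraph V ⥤ EGraph W) (hT : OverSet T) {n : ℕ} (Xs : Fin n → V) : W :=
  (T.obj (seq Xs)).hom (cast (hT.1 _).symm (ULift.up 0))
    (cast (hT.1 _).symm (ULift.up (Fin.last n)))

/-- The identity-on-objects morphism of sequence graphs induced by a family of maps. -/
def seqHom {n : ℕ} {Xs Ys : Fin n → V} (g : ∀ i, Xs i ⟶ Ys i) : seq Xs ⟶ seq Ys where
  f := _root_.id
  φ a b :=
    if h : (a.down : ℕ) + 1 = (b.down : ℕ) ∧ (a.down : ℕ) < n then
      eqToHom (dif_pos h) ≫ g ⟨a.down, h.2⟩ ≫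
        eqToHom (show Ys ⟨a.down, h.2⟩ = (seq Ys).hom (_root_.id a) (_root_.id b) by
          simp only [seq, id_eq]; split_ifs <;> first | rfl | exact absurd h ‹_› | exact absurd ‹_› h)
    else eqToHom (show (seq Xs).hom a b = (seq Ys).hom (_root_.id a) (_root_.id b) by
      simp only [seq, id_eq]; split_ifs <;> first | rfl | exact absurd h ‹_› | exact absurd ‹_› h)

/-- The family of maps `update Xs i₀ A ⟶ update Xs i₀ B` which is `g` in
position `i₀` and the identity elsewhere. -/
def updHom {n : ℕ} (Xs : Fin n → V) (i₀ : Fin n) {A B : V} (g : A ⟶ B) :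
    ∀ i, Function.update Xs i₀ A i ⟶ Function.update Xs i₀ B i := fun i =>
  if h : i = i₀ then
    eqToHom (by rw [h, Function.update_self]) ≫ g ≫
      eqToHom (by rw [h, Function.update_self])
  else eqToHom (by rw [Function.update_of_ne h, Function.update_of_ne h])

/-- A functor over `Set` between categories of enriched graphs is *distributive* when
each `T̄ₙ` preserves coproducts in each variable. -/
def Distributive (T : EGraph V ⥤ EGraph W) (hT : OverSet T) : Prop :=
  ∀ (n : ℕ) (i₀ : Fin n) (Xs : Fin n → V) {J : Type v} (Y : J → V)
    (c : Cofan Y) (_ : IsColimit c),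
    Nonempty (IsColimit (Cofan.mk (Tbar T hT (Function.update Xs i₀ c.pt))
      (fun j =>
        (T.map (seqHom (updHom Xs i₀ (c.inj j)))).φ (cast (hT.1 _).symm (ULift.up 0))
            (cast (hT.1 _).symm (ULift.up (Fin.last n))) ≫
          eqToHom (by erw [map_f_eq T hT, map_f_eq T hT]; dsimp only [seqHom, Tbar, id_eq]; rfl))))

/-- The morphism `x̄ : (X(x₀,x₁),…,X(x_{n-1},xₙ)) ⟶ X` associated to a path of
objects of `X`. -/
def pathHom {X : EGraph V} {n : ℕ} (x : Fin (n + 1) → X.obj) :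
    seq (fun i : Fin n => X.hom (x i.castSucc) (x i.succ)) ⟶ X where
  f p := x p.down
  φ a b :=
    if h : (a.down : ℕ) + 1 = (b.down : ℕ) ∧ (a.down : ℕ) < n then
      eqToHom (by
        dsimp only [seq]
        rw [dif_pos h]
        exact congrArg₂ X.hom (congrArg x (Fin.ext (by simp)))
          (congrArg x (Fin.ext (by simpa using h.1))))
    else eqToHom (dif_neg h) ≫ initial.to _

/-- Index type for the paths from `a` to `b` in the graph `X`. -/
def PathIdx (X : EGraph V) (a b : X.obj) : Type v :=
  Σ n : ℕ, { x : Fin (n + 1) → X.obj // x 0 = a ∧ x (Fin.last n) = b }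

/-- A functor over `Set` between categories of enriched graphs is *path-like* when the
canonical maps `∐ T̄ᵢ X(x_{i-1},xᵢ) ⟶ TX(a,b)` are isomorphisms (i.e. exhibit
`TX(a,b)` as the coproduct). -/
def PathLike (T : EGraph V ⥤ EGraph W) (hT : OverSet T) : Prop :=
  ∀ (X : EGraph V) (a b : X.obj),
    Nonempty (IsColimit (Cofan.mk
      ((T.obj X).hom (cast (hT.1 X).symm a) (cast (hT.1 X).symm b))
      (fun p : PathIdx X a b =>
        (T.map (pathHom p.2.1)).φ (cast (hT.1 _).symm (ULift.up 0))
            (cast (hT.1 _).symm (ULift.up (Fin.last p.1))) ≫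
          eqToHom (by
            erw [map_f_eq T hT, map_f_eq T hT]
            exact congrArg₂ _ (congrArg _ p.2.2.1) (congrArg _ p.2.2.2)))))

end
end EGraph

namespace EGraph

variable {V : Type u} [Category.{v} V] {W : Type w} [Category.{v} W]

theorem mapG_overSet (R : V ⥤ W) : OverSet (mapG R) :=
  ⟨fun _ => rfl, fun _ => HEq.rfl⟩

section AuxCofan

variable {J : Type v}

/-- A cofan whose point and all of whose components are initial is a colimit cofan. -/
noncomputable def isColimitCofanOfInitials {Y : J → W} (c : Cofan Y)
    (hpt : IsInitial c.pt) (hY : ∀ j, IsInitial (Y j)) : IsColimit c :=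
  mkCofanColimit c (fun t => hpt.to t.pt) (fun t j => (hY j).hom_ext _ _)
    (fun t _ _ => hpt.hom_ext _ _)

/-- A cofan with one iso component and all other components initial is a colimit cofan. -/
noncomputable def isColimitCofanOfIsoInitials {Y : J → W} (c : Cofan Y)
    (j₀ : J) (hj : IsIso (c.inj j₀)) (hY : ∀ j, j ≠ j₀ → IsInitial (Y j)) : IsColimit c :=
  mkCofanColimit c (fun t => inv (c.inj j₀) ≫ t.inj j₀)
    (fun t j => by
      by_cases h : j = j₀
      · subst h; simp
      · exact (hY j h).hom_ext _ _)
    (fun t m hm => by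
      rw [← hm j₀, ← Category.assoc, IsIso.inv_hom_id, Category.id_comp])

/-- Transfer of colimit cofans across componentwise isomorphisms. -/
noncomputable def isColimitCofanOfIso {Y Y' : J → W} {c : Cofan Y}
    (hc : IsColimit c) (c' : Cofan Y') (e : ∀ j, Y' j ≅ Y j) (p : c'.pt ≅ c.pt)
    (w : ∀ j, c'.inj j ≫ p.hom = (e j).hom ≫ c.inj j) : IsColimit c' :=
  mkCofanColimit c'
    (fun t => p.hom ≫ hc.desc (Cofan.mk t.pt fun j => (e j).inv ≫ t.inj j))
    (fun t j => by
      have hf := hc.fac (Cofan.mk t.pt fun j => (e j).inv ≫ t.inj j) ⟨j⟩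
      dsimp only [Cofan.mk_pt, Cofan.mk_ι_app, Cofan.inj] at hf ⊢
      have w' := w j; dsimp only [Cofan.inj] at w'
      rw [← Category.assoc, w', Category.assoc, hf, ← Category.assoc,
        Iso.hom_inv_id, Category.id_comp])
    (fun t m hm => by
      have key : hc.desc (Cofan.mk t.pt fun j => (e j).inv ≫ t.inj j) = p.inv ≫ m := by
        refine hc.hom_ext fun ⟨j⟩ => ?_
        have hf := hc.fac (Cofan.mk t.pt fun j => (e j).inv ≫ t.inj j) ⟨j⟩
        dsimp only [Cofan.mk_pt, Cofan.mk_ι_app, Cofan.inj] at hf ⊢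
        rw [hf]
        have hcj : (c.ι.app ⟨j⟩ : Y j ⟶ c.pt) = (e j).inv ≫ c'.inj j ≫ p.hom := by
          rw [w j, ← Category.assoc, Iso.inv_hom_id, Category.id_comp]
          rfl
        rw [hcj]
        simp only [Category.assoc, Iso.hom_inv_id_assoc]
        have hm' := hm j; dsimp only [Cofan.inj] at hm'
        dsimp only [Cofan.inj]
        rw [hm']
      rw [key, ← Category.assoc, Iso.hom_inv_id, Category.id_comp])

end AuxCofan

section AuxSeq

variable [HasInitial V]

theorem seq_hom_of_ne {n : ℕ} (Xs : Fin n → V) (h : n ≠ 1) :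
    (seq Xs).hom (ULift.up 0) (ULift.up (Fin.last n)) = ⊥_ V := by
  dsimp only [seq]
  exact dif_neg (by simp; omega)

theorem seq_hom_of_one (Xs : Fin 1 → V) :
    (seq Xs).hom (ULift.up 0) (ULift.up (Fin.last 1)) = Xs 0 := by
  dsimp only [seq]
  rw [dif_pos (by simp)]
  exact congrArg Xs (Subsingleton.elim _ _)

end AuxSeq

/-- If `R : V ⥤ W` is a coproduct-preserving functor between categories
with coproducts, then the induced functor `GR : GV ⥤ GW` on categories of enriched
graphs is distributive and path-like. -/
theorem mapG_distributive_and_pathLike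
    [HasInitial V] [HasInitial W] [HasCoproducts.{v} V] [HasCoproducts.{v} W]
    (R : V ⥤ W) (hR : ∀ J : Type v, PreservesColimitsOfShape (Discrete J) R) :
    Distributive (mapG R) (mapG_overSet R) ∧ PathLike (mapG R) (mapG_overSet R) := by
  haveI hsh : PreservesColimitsOfShape (Discrete PEmpty.{1}) R := by
    haveI := hR PEmpty.{v+1}
    exact preservesColimitsOfShape_of_equiv
      (Discrete.equivalence (Equiv.equivOfIsEmpty PEmpty.{v+1} PEmpty.{1})) R
  have hRbot : IsInitial (R.obj (⊥_ V)) := isColimitOfHasInitialOfPreservesColimit R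
  constructor
  · intro n i₀ Xs J Y c hc
    haveI := hR J
    match n, i₀ with
    | 1, i₀ =>
      have hupd : ∀ A : V, (seq (Function.update Xs i₀ A)).hom (ULift.up 0)
          (ULift.up (Fin.last 1)) = A := fun A => by
        rw [seq_hom_of_one, Subsingleton.elim (0 : Fin 1) i₀, Function.update_self]
      have hc' : IsColimit (Cofan.mk c.pt c.inj) :=
        hc.ofIsoColimit (Cocones.ext (Iso.refl _) (by rintro ⟨j⟩; simp [Cofan.inj]))
      have hmap := isColimitCofanMkObjOfIsColimit R Y c.inj hc'
      have key : ∀ j : J, ((mapG R).map (seqHom (updHom Xs i₀ (c.inj j)))).φ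
            (ULift.up 0) (ULift.up (Fin.last 1)) =
          eqToHom (congrArg R.obj (hupd (Y j))) ≫ R.map (c.inj j) ≫
            eqToHom (congrArg R.obj (hupd c.pt)).symm := by
        intro j
        dsimp only [mapG, seqHom]
        rw [dif_pos (by simp)]
        dsimp only [updHom]
        rw [dif_pos (Subsingleton.elim _ _)]
        simp [eqToHom_map]
        erw [eqToHom_map]
        simp
      refine ⟨isColimitCofanOfIso hmap _
        (fun j => eqToIso (congrArg R.obj (hupd (Y j))))
        (eqToIso (congrArg R.obj (hupd c.pt))) ?_⟩
      intro j
      have key2 : (((mapG R).map (seqHom (updHom Xs i₀ (c.inj j)))).φ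
            (ULift.up 0) (ULift.up (Fin.last 1)) ≫
          eqToHom (rfl : R.obj ((seq (Function.update Xs i₀ c.pt)).hom
            (ULift.up 0) (ULift.up (Fin.last 1))) = _)) ≫
          eqToHom (congrArg R.obj (hupd c.pt)) =
          eqToHom (congrArg R.obj (hupd (Y j))) ≫ R.map (c.inj j) := by
        rw [key j]
        erw [Category.assoc, Category.assoc, Category.assoc, eqToHom_trans_assoc, eqToHom_trans,
          eqToHom_refl, Category.comp_id]
        rfl
      exact key2
    | (n + 2), i₀ =>
      refine ⟨isColimitCofanOfInitials _ ?_ ?_⟩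
      · exact IsInitial.ofIso hRbot
          (eqToIso (congrArg R.obj (seq_hom_of_ne _ (by omega)).symm))
      · intro j
        exact IsInitial.ofIso hRbot
          (eqToIso (congrArg R.obj (seq_hom_of_ne _ (by omega)).symm))
  · intro X a b
    let x₀ : Fin 2 → X.obj := fun i => if (i : ℕ) = 0 then a else b
    have hx0 : x₀ 0 = a := by simp [x₀]
    have hx1 : x₀ (Fin.last 1) = b := by simp [x₀, Fin.last]
    let j₀ : PathIdx X a b := ⟨1, ⟨x₀, hx0, hx1⟩⟩
    refine ⟨isColimitCofanOfIsoInitials _ j₀ ?_ ?_⟩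
    · have hE : (seq fun i : Fin 1 => X.hom (x₀ i.castSucc) (x₀ i.succ)).hom
          (ULift.up 0) (ULift.up (Fin.last 1)) = X.hom (x₀ 0) (x₀ (Fin.last 1)) := by
        rw [seq_hom_of_one]
        congr 1
      have key : ((mapG R).map (pathHom x₀)).φ (ULift.up 0) (ULift.up (Fin.last 1)) =
          eqToHom (congrArg R.obj hE) := by
        dsimp only [mapG, pathHom]
        rw [dif_pos (by simp)]
        simp [eqToHom_map]
      have pf2 : R.obj (X.hom (x₀ 0) (x₀ (Fin.last 1))) = R.obj (X.hom a b) := by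
        rw [hx0, hx1]
      have key2 : IsIso (((mapG R).map (pathHom x₀)).φ (ULift.up 0)
          (ULift.up (Fin.last 1)) ≫ eqToHom pf2) := by
        rw [key]
        erw [eqToHom_trans]
        infer_instance
      exact key2
    · intro p hp
      have hn : p.1 ≠ 1 := by
        intro h
        apply hp
        obtain ⟨n, x, h1, h2⟩ := p
        dsimp at h
        subst h
        have hx : x = x₀ := by
          funext i
          fin_cases i
          · show x 0 = x₀ 0
            rw [h1, hx0]
          · show x (Fin.last 1) = x₀ (Fin.last 1)
            rw [h2, hx1]
        exact congrArg (fun y => (⟨1, y⟩ : PathIdx X a b)) (Subtype.ext hx)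
      exact IsInitial.ofIso hRbot
        (eqToIso (congrArg R.obj (seq_hom_of_ne _ hn).symm))

end EGraph
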